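/- arXiv:1803.04060 — 2 statements merged into one kernel-verified Lean document; each statement's English description precedes it below -/
import Mathlib

section
/- Let B = [[2,1],[1,2]] and let g be any permutation of the six edges of the directed graph of B that induces the exchange of the two vertices (g maps the two loops at vertex 1 bijectively to the two loops at vertex 2 and vice versa, and swaps the edge from vertex 1 to vertex 2 with the edge from vertex 2 to vertex 1) and satisfies g∘g = id. Then the map φ: X_B → X_B defined by φ(x)_i = g(x_i) is an automorphism of (X_B, σ_B) of order two, and φ is not inert. -/
open Matrix Set Filter

/-- The edge set of the directed graph with adjacency matrix `A`:
`A i j` edges from vertex `i` to vertex `j`. -/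
def Edges {k : ℕ} (A : Matrix (Fin k) (Fin k) ℕ) : Type := Σ i j : Fin k, Fin (A i j)

namespace Edges

variable {k : ℕ} {A : Matrix (Fin k) (Fin k) ℕ}

/-- initial vertex of an edge -/
def src (e : Edges A) : Fin k := e.1

/-- terminal vertex of an edge -/
def tgt (e : Edges A) : Fin k := e.2.1

instance : UniformSpace (Edges A) := ⊥

instance : Fintype (Edges A) := @Sigma.instFintype _ _ (fun _ => inferInstance) _

end Edges

/-- The edge shift space `X_A`: bi-infinite edge paths. -/
def SFT {k : ℕ} (A : Matrix (Fin k) (Fin k) ℕ) : Set (ℤ → Edges A) :=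
  {x | ∀ i : ℤ, (x i).tgt = (x (i + 1)).src}

/-- The shift map `σ_A` on `X_A`. -/
def shiftMap {k : ℕ} (A : Matrix (Fin k) (Fin k) ℕ) : ↥(SFT A) → ↥(SFT A) :=
  fun x => ⟨fun i => x.1 (i + 1), fun i => x.2 (i + 1)⟩

/-- The inverse shift map `σ_A⁻¹` on `X_A`. -/
def shiftInv {k : ℕ} (A : Matrix (Fin k) (Fin k) ℕ) : ↥(SFT A) → ↥(SFT A) :=
  fun x => ⟨fun i => x.1 (i - 1), fun i => by
    have h := x.2 (i - 1)
    simpa [sub_add_cancel, add_sub_cancel_right] using h⟩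

/-- `A` is irreducible: for all `I J` there is `n ≥ 1` with `(A^n) I J > 0`. -/
def IrreducibleMatrix {k : ℕ} (A : Matrix (Fin k) (Fin k) ℕ) : Prop :=
  ∀ I J : Fin k, ∃ n : ℕ, 1 ≤ n ∧ 0 < (A ^ n) I J

/-- `A` is primitive: some power of `A` has all entries strictly positive. -/
def PrimitiveMatrix {k : ℕ} (A : Matrix (Fin k) (Fin k) ℕ) : Prop :=
  ∃ n : ℕ, 1 ≤ n ∧ ∀ I J : Fin k, 0 < (A ^ n) I J

/-- `φ` together with its inverse `ψ` is an automorphism of the system `(α, T)`: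
a homeomorphism commuting with `T`. -/
def IsAutPair {α : Type*} [TopologicalSpace α] (T φ ψ : α → α) : Prop :=
  Continuous φ ∧ Continuous ψ ∧ Function.LeftInverse ψ φ ∧ Function.RightInverse ψ φ ∧
    φ ∘ T = T ∘ φ

section Coding

variable {E : Type*} {X : Set (ℤ → E)}

/-- `S` `φ`-codes `T`. -/
def Codes (φ : ↥X → ↥X) (S T : Set ℤ) : Prop :=
  ∀ x y : ↥X, (∀ i ∈ S, (x : ℤ → E) i = (y : ℤ → E) i) →
    ∀ j ∈ T, (φ x : ℤ → E) j = (φ y : ℤ → E) j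

/-- `W⁻(n, φ) = sup {m : (-∞,0] φⁿ-codes (-∞,m]}`. -/
noncomputable def Wminus (φ : ↥X → ↥X) (n : ℕ) : ℤ :=
  sSup {m : ℤ | Codes (φ^[n]) (Set.Iic 0) (Set.Iic m)}

/-- `W⁺(n, φ) = inf {m : [0,∞) φⁿ-codes [m,∞)}`. -/
noncomputable def Wplus (φ : ↥X → ↥X) (n : ℕ) : ℤ :=
  sInf {m : ℤ | Codes (φ^[n]) (Set.Ici 0) (Set.Ici m)}

end Coding

section Dimension

variable {k : ℕ} (A : Matrix (Fin k) (Fin k) ℕ)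

/-- `A` as a matrix over `ℚ`. -/
def Aq : Matrix (Fin k) (Fin k) ℚ := A.map (Nat.cast : ℕ → ℚ)

/-- The eventual range `R(A) = ℚ^k · A^k` (row vectors). -/
noncomputable def evRange : Submodule ℚ (Fin k → ℚ) :=
  LinearMap.range (Matrix.vecMulLinear (Aq A ^ k))

lemma evRange_mapsTo :
    ∀ x ∈ evRange A, Matrix.vecMulLinear (Aq A) x ∈ evRange A := by
  rintro x ⟨y, rfl⟩
  exact ⟨Matrix.vecMulLinear (Aq A) y, by
    simp [Matrix.vecMulLinear_apply, Matrix.vecMul_vecMul, ← pow_succ, ← pow_succ']⟩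

/-- `δ_A`, the restriction of (right multiplication by) `A` to `R(A)`. -/
noncomputable def deltaA : ↥(evRange A) →ₗ[ℚ] ↥(evRange A) :=
  LinearMap.restrict (Matrix.vecMulLinear (Aq A)) (evRange_mapsTo A)

/-- The `m`-ray `R(x, m)` determined by a point `x ∈ X_A`. -/
def ray (x : ↥(SFT A)) (m : ℤ) : Set ↥(SFT A) :=
  {y | ∀ i : ℤ, i ≤ m → (y : ℤ → Edges A) i = (x : ℤ → Edges A) i}

/-- `U` is an `m`-beam: a finite union of `m`-rays. -/
def IsBeam (U : Set ↥(SFT A)) (m : ℤ) : Prop :=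
  ∃ F : Finset ↥(SFT A), U = ⋃ x ∈ F, ray A x m

/-- The vector `v_{U,m}`: its `J`-th entry counts the distinct `m`-rays contained in the
`m`-beam `U` whose `m`-th edge ends at vertex `J`. -/
noncomputable def beamVec (U : Set ↥(SFT A)) (m : ℤ) : Fin k → ℚ := fun J =>
  (Nat.card {t : {i : ℤ // i ≤ m} → Edges A //
    (∃ y ∈ U, ∀ i : {i : ℤ // i ≤ m}, (y : ℤ → Edges A) i.1 = t i) ∧
      (t ⟨m, le_refl m⟩).tgt = J} : ℚ)

/-- `g = θ(U)`, i.e. `g ∈ R(A)` and `δ_A^{k+m} g = v_{U,m} · A^k` for some presentation of `U`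
as an `m`-beam. -/
def IsThetaVal (U : Set ↥(SFT A)) (g : Fin k → ℚ) : Prop :=
  g ∈ evRange A ∧ ∃ m : ℕ, IsBeam A U (m : ℤ) ∧
    g ᵥ* (Aq A ^ (k + m)) = beamVec A U (m : ℤ) ᵥ* (Aq A ^ k)

/-- `S` is the image of `φ` under the dimension representation: a linear automorphism of
`R(A)` commuting with `δ_A` and satisfying `S (θ U) = θ (φ '' U)` for every beam `U`. -/
def IsDimRep (φ : ↥(SFT A) → ↥(SFT A)) (S : ↥(evRange A) →ₗ[ℚ] ↥(evRange A)) : Prop :=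
  Function.Bijective S ∧ S ∘ₗ deltaA A = deltaA A ∘ₗ S ∧
    ∀ (U : Set ↥(SFT A)) (g h : Fin k → ℚ) (hg : IsThetaVal A U g)
      (hh : IsThetaVal A (φ '' U) h), S ⟨g, hg.1⟩ = ⟨h, hh.1⟩

/-- The set of eigenvalues of the complexification `S ⊗ 1` of a linear endomorphism `S`
of `R(A)`: the complex roots of the characteristic polynomial of `S`. -/
noncomputable def cSpectrum (S : ↥(evRange A) →ₗ[ℚ] ↥(evRange A)) : Set ℂ :=
  {z : ℂ | ((LinearMap.charpoly S).map (algebraMap ℚ ℂ)).IsRoot z}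

/-- The spectral radius of the complexification of `S`. -/
noncomputable def specRad (S : ↥(evRange A) →ₗ[ℚ] ↥(evRange A)) : ℝ :=
  sSup ((fun z : ℂ => ‖z‖) '' cSpectrum A S)

/-- The set of nonzero-spectrum eigenvalues of `A` over `ℂ` (roots of its characteristic
polynomial). -/
noncomputable def matSpectrum : Set ℂ :=
  {z : ℂ | (Matrix.charpoly (A.map (Nat.cast : ℕ → ℂ))).IsRoot z}

/-- The spectral radius `ρ(A)`. -/
noncomputable def rhoA : ℝ := sSup ((fun z : ℂ => ‖z‖) '' matSpectrum A)

/-- `ρ_A⁻ = |λ_s|⁻¹` where `λ_s` is a nonzero eigenvalue of `A` of minimal modulus: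
the spectral radius of `δ_A⁻¹ ⊗ 1`. -/
noncomputable def rhoAminus : ℝ :=
  sSup ((fun z => ‖z‖⁻¹) '' (matSpectrum A \ {0}))

/-- The number of admissible words of length `m` in `X_A` (with `P(0) = 1`);
for an integer argument `z`, the value is `P(max z 0)`. -/
noncomputable def wordCount (z : ℤ) : ℕ :=
  Nat.card {w : Fin z.toNat → Edges A //
    ∃ (x : ↥(SFT A)) (i : ℤ), ∀ j : Fin z.toNat, (x : ℤ → Edges A) (i + j) = w j}

end Dimension

section Stmt3Aux

variable {k : ℕ} {A : Matrix (Fin k) (Fin k) ℕ}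

lemma stmt3_mem_ray_self (x : ↥(SFT A)) (m : ℤ) : x ∈ ray A x m := fun _ _ => rfl

lemma stmt3_beamVec_ray (z : ↥(SFT A)) (m : ℤ) (J : Fin k) :
    beamVec A (ray A z m) m J =
      if ((z : ℤ → Edges A) m).tgt = J then 1 else 0 := by
  unfold beamVec
  split_ifs with h
  · haveI : Nonempty {t : {i : ℤ // i ≤ m} → Edges A //
        (∃ y ∈ ray A z m, ∀ i : {i : ℤ // i ≤ m}, (y : ℤ → Edges A) i.1 = t i) ∧
          (t ⟨m, le_refl m⟩).tgt = J} :=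
      ⟨⟨fun i => (z : ℤ → Edges A) i.1,
        ⟨⟨z, stmt3_mem_ray_self z m, fun _ => rfl⟩, h⟩⟩⟩
    haveI : Subsingleton {t : {i : ℤ // i ≤ m} → Edges A //
        (∃ y ∈ ray A z m, ∀ i : {i : ℤ // i ≤ m}, (y : ℤ → Edges A) i.1 = t i) ∧
          (t ⟨m, le_refl m⟩).tgt = J} := by
      constructor
      rintro ⟨t, ⟨y, hy, hty⟩, -⟩ ⟨t', ⟨y', hy', hty'⟩, -⟩
      apply Subtype.ext
      show t = t'
      funext i
      rw [← hty i, ← hty' i, hy i.1 i.2, hy' i.1 i.2]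
    rw [Nat.card_unique]
    norm_num
  · haveI : IsEmpty {t : {i : ℤ // i ≤ m} → Edges A //
        (∃ y ∈ ray A z m, ∀ i : {i : ℤ // i ≤ m}, (y : ℤ → Edges A) i.1 = t i) ∧
          (t ⟨m, le_refl m⟩).tgt = J} := by
      constructor
      rintro ⟨t, ⟨y, hy, hty⟩, htJ⟩
      apply h
      rw [← hty ⟨m, le_refl m⟩] at htJ
      rw [hy m (le_refl m)] at htJ
      exact htJ
    rw [Nat.card_of_isEmpty]
    norm_num

local notation "B2" => (!![2, 1; 1, 2] : Matrix (Fin 2) (Fin 2) ℕ)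

lemma stmt3_AqB : Aq B2 = !![(2 : ℚ), 1; 1, 2] := by
  ext i j
  fin_cases i <;> fin_cases j <;> simp [Aq, Matrix.map_apply]

lemma stmt3_AqB_sq : (Aq B2) ^ 2 = !![(5 : ℚ), 4; 4, 5] := by
  rw [stmt3_AqB]
  ext i j
  fin_cases i <;> fin_cases j <;>
    simp [pow_two, Matrix.mul_apply, Fin.sum_univ_two] <;> norm_num

lemma stmt3_mem_evRange (v : Fin 2 → ℚ) : v ∈ evRange B2 := by
  refine ⟨v ᵥ* !![(5 : ℚ)/9, -4/9; -4/9, 5/9], ?_⟩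
  have hmul : !![(5 : ℚ)/9, -4/9; -4/9, 5/9] * !![(5 : ℚ), 4; 4, 5] = 1 := by
    ext i j
    fin_cases i <;> fin_cases j <;>
      simp [Matrix.mul_apply, Fin.sum_univ_two, Matrix.one_apply] <;> norm_num
  rw [Matrix.vecMulLinear_apply, stmt3_AqB_sq, Matrix.vecMul_vecMul, hmul, Matrix.vecMul_one]

def stmt3_e0 : Edges B2 := ⟨0, 0, ⟨0, by norm_num⟩⟩

def stmt3_x0 : ↥(SFT B2) := ⟨fun _ => stmt3_e0, fun _ => rfl⟩

lemma stmt3_x0_apply (i : ℤ) : (stmt3_x0 : ℤ → Edges B2) i = stmt3_e0 := rfl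

lemma stmt3_e0_tgt : stmt3_e0.tgt = 0 := rfl

lemma stmt3_e0_src : stmt3_e0.src = 0 := rfl

end Stmt3Aux

/-- Let `B = [[2,1],[1,2]]` and let `g` be an involutive permutation of the six
edges of the graph of `B` inducing the exchange of the two vertices. Then the induced map
`φ(x)_i = g(x_i)` exists as a map of `X_B`, and any such map is an automorphism of
`(X_B, σ_B)` of order two which is not inert. -/
theorem stmt3 (g : Edges (!![2, 1; 1, 2] : Matrix (Fin 2) (Fin 2) ℕ) →
      Edges (!![2, 1; 1, 2] : Matrix (Fin 2) (Fin 2) ℕ))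
    (hg2 : Function.Involutive g)
    (hgsrc : ∀ e, (g e).src = Equiv.swap (0 : Fin 2) 1 e.src)
    (hgtgt : ∀ e, (g e).tgt = Equiv.swap (0 : Fin 2) 1 e.tgt) :
    (∃ φ : ↥(SFT (!![2, 1; 1, 2] : Matrix (Fin 2) (Fin 2) ℕ)) →
        ↥(SFT (!![2, 1; 1, 2] : Matrix (Fin 2) (Fin 2) ℕ)),
      ∀ (x : ↥(SFT (!![2, 1; 1, 2] : Matrix (Fin 2) (Fin 2) ℕ))) (i : ℤ),
        (φ x : ℤ → Edges (!![2, 1; 1, 2] : Matrix (Fin 2) (Fin 2) ℕ)) i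
          = g ((x : ℤ → Edges (!![2, 1; 1, 2] : Matrix (Fin 2) (Fin 2) ℕ)) i)) ∧
    ∀ φ : ↥(SFT (!![2, 1; 1, 2] : Matrix (Fin 2) (Fin 2) ℕ)) →
        ↥(SFT (!![2, 1; 1, 2] : Matrix (Fin 2) (Fin 2) ℕ)),
      (∀ (x : ↥(SFT (!![2, 1; 1, 2] : Matrix (Fin 2) (Fin 2) ℕ))) (i : ℤ),
        (φ x : ℤ → Edges (!![2, 1; 1, 2] : Matrix (Fin 2) (Fin 2) ℕ)) i
          = g ((x : ℤ → Edges (!![2, 1; 1, 2] : Matrix (Fin 2) (Fin 2) ℕ)) i)) →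
      IsAutPair (shiftMap (!![2, 1; 1, 2] : Matrix (Fin 2) (Fin 2) ℕ)) φ φ ∧
      Function.Involutive φ ∧ φ ≠ id ∧
      ∀ S, IsDimRep (!![2, 1; 1, 2] : Matrix (Fin 2) (Fin 2) ℕ) φ S → S ≠ LinearMap.id := by
  constructor
  · -- existence of φ
    refine ⟨fun x => ⟨fun i => g ((x : ℤ → Edges _) i), fun i => ?_⟩, fun x i => rfl⟩
    show (g ((x : ℤ → Edges _) i)).tgt = (g ((x : ℤ → Edges _) (i + 1))).src
    rw [hgtgt, hgsrc, x.2 i]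
  · intro φ hφ
    have hinv : Function.Involutive φ := by
      intro x
      apply Subtype.ext
      funext i
      rw [hφ, hφ]
      exact hg2 _
    haveI : DiscreteTopology
        (Edges (!![2, 1; 1, 2] : Matrix (Fin 2) (Fin 2) ℕ)) :=
      ⟨UniformSpace.toTopologicalSpace_bot⟩
    have hcont : Continuous φ := by
      have hval : (fun x : ↥(SFT (!![2, 1; 1, 2] : Matrix (Fin 2) (Fin 2) ℕ)) => (φ x).1)
          = fun x => fun i => g (x.1 i) := funext fun x => funext fun i => hφ x i
      have hc : Continuous
          (fun x : ↥(SFT (!![2, 1; 1, 2] : Matrix (Fin 2) (Fin 2) ℕ)) => (φ x).1) := by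
        rw [hval]
        exact continuous_pi fun i =>
          continuous_of_discreteTopology.comp ((continuous_apply i).comp continuous_subtype_val)
      exact Continuous.subtype_mk hc fun x => (φ x).2
    have hcomm : φ ∘ shiftMap (!![2, 1; 1, 2] : Matrix (Fin 2) (Fin 2) ℕ)
        = shiftMap (!![2, 1; 1, 2] : Matrix (Fin 2) (Fin 2) ℕ) ∘ φ := by
      funext x
      apply Subtype.ext
      funext i
      exact (hφ (shiftMap _ x) i).trans (hφ x (i + 1)).symm
    refine ⟨⟨hcont, hcont, hinv, hinv, hcomm⟩, hinv, ?_, ?_⟩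
    · -- φ ≠ id
      intro h
      have h1 := hφ stmt3_x0 0
      rw [h] at h1
      have h3 := congrArg Edges.src h1
      rw [hgsrc] at h3
      rw [stmt3_x0_apply, stmt3_e0_src] at h3
      rw [Equiv.swap_apply_left] at h3
      simp at h3
      exact absurd h3 (by decide)
    · -- non-inert
      intro S hS heq
      have himg : φ '' ray _ stmt3_x0 0 = ray _ (φ stmt3_x0) 0 := by
        ext y
        constructor
        · rintro ⟨z, hz, rfl⟩ i hi
          rw [hφ, hφ]
          exact congrArg g (hz i hi)
        · intro hy
          refine ⟨φ y, fun i hi => ?_, hinv y⟩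
          rw [hφ, hy i hi, hφ]
          exact hg2 _
      have htgt : ((φ stmt3_x0 : ℤ → Edges (!![2, 1; 1, 2] : Matrix (Fin 2) (Fin 2) ℕ)) 0).tgt
          = (1 : Fin 2) := by
        rw [hφ, hgtgt, stmt3_x0_apply, stmt3_e0_tgt, Equiv.swap_apply_left]
      have hv1 : beamVec _ (ray _ stmt3_x0 0) 0 = ![1, 0] := by
        funext J
        rw [stmt3_beamVec_ray, stmt3_x0_apply, stmt3_e0_tgt]
        fin_cases J <;> simp
      have hv2 : beamVec _ (ray _ (φ stmt3_x0) 0) 0 = ![0, 1] := by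
        funext J
        rw [stmt3_beamVec_ray, htgt]
        fin_cases J <;> simp
      have hg1 : IsThetaVal _ (ray _ stmt3_x0 0) ![1, 0] := by
        refine ⟨stmt3_mem_evRange _, 0, ⟨{stmt3_x0}, by simp⟩, ?_⟩
        simp only [Nat.cast_zero]
        rw [hv1]
      have hh1 : IsThetaVal _ (φ '' ray _ stmt3_x0 0) ![0, 1] := by
        rw [himg]
        refine ⟨stmt3_mem_evRange _, 0, ⟨{φ stmt3_x0}, by simp⟩, ?_⟩
        simp only [Nat.cast_zero]
        rw [hv2]
      have key := hS.2.2 (ray _ stmt3_x0 0) ![1, 0] ![0, 1] hg1 hh1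
      rw [heq] at key
      have key2 : (![1, 0] : Fin 2 → ℚ) = ![0, 1] := congrArg Subtype.val key
      have h0 := congrFun key2 0
      norm_num at h0
end

section
/- Let (X_5, σ) be the full shift on the 5-letter alphabet 𝒜 = {(a,b) : a,b ∈ {0,1}} ∪ {c}, and let μ be the uniform Bernoulli measure on X_5 (the shift-invariant product measure giving each symbol probability 1/5). Define φ: X_5 → X_5 as the sliding block code of range one given by: φ(x)_i = c if x_i = c; φ(x)_i = (a′,a) if x_{i−1} = c, x_i = (a,b), x_{i+1} = (a′,b′); φ(x)_i = (b′,b) if x_{i−1} = (a,b), x_i = (a′,b′), x_{i+1} = c; and φ(x)_i = (a″,b) if x_{i−1} = (a,b), x_i = (a′,b′), x_{i+1} = (a″,b″). Then: (1) φ is an automorphism of (X_5, σ), i.e. a homeomorphism commuting with σ; (2) for every n ≥ 1 and μ-almost every z ∈ X_5, the sequence k ↦ φ^k(z)_{[−n,n]} (k ≥ 0) of words of length 2n+1 is eventually periodic; and (3) h_top(φ) ≥ log 4. -/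
open Filter Set

/-- The 5-letter alphabet `𝒜 = {(a,b) : a,b ∈ {0,1}} ∪ {c}`. -/
def Alph5 : Type := (Bool × Bool) ⊕ Unit

/-- The symbol `c`. -/
def csym : Alph5 := Sum.inr ()

instance : UniformSpace Alph5 := ⊥
instance : MeasurableSpace Alph5 := ⊤

/-- The full shift `σ` on `X_5 = 𝒜^ℤ`. -/
def shift5 : (ℤ → Alph5) → (ℤ → Alph5) := fun x i => x (i + 1)

/- ### Auxiliary material -/

instance : DecidableEq Alph5 := inferInstanceAs (DecidableEq ((Bool × Bool) ⊕ Unit))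
instance : Fintype Alph5 := inferInstanceAs (Fintype ((Bool × Bool) ⊕ Unit))
instance : DiscreteTopology Alph5 := ⟨UniformSpace.toTopologicalSpace_bot⟩

/-- The local rule of the automorphism. -/
def fA (t : Alph5 × Alph5 × Alph5) : Alph5 :=
  match t.2.1 with
  | Sum.inr _ => csym
  | Sum.inl (a, b) =>
    match t.1, t.2.2 with
    | Sum.inr _, Sum.inl (a', _) => Sum.inl (a', a)
    | Sum.inr _, Sum.inr _ => Sum.inl (b, a)
    | Sum.inl (_, β), Sum.inr _ => Sum.inl (b, β)
    | Sum.inl (_, β), Sum.inl (a'', _) => Sum.inl (a'', β)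

/-- The local rule of the inverse. -/
def gA (t : Alph5 × Alph5 × Alph5) : Alph5 :=
  match t.2.1 with
  | Sum.inr _ => csym
  | Sum.inl (a', b') =>
    match t.1, t.2.2 with
    | Sum.inr _, Sum.inl (_, B') => Sum.inl (b', B')
    | Sum.inr _, Sum.inr _ => Sum.inl (b', a')
    | Sum.inl (A, _), Sum.inr _ => Sum.inl (A, a')
    | Sum.inl (A, _), Sum.inl (_, B'') => Sum.inl (A, B'')

theorem keyL : ∀ u v w s t : Alph5, gA (fA (u,v,w), fA (v,w,s), fA (w,s,t)) = w := by decide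
theorem keyR : ∀ u v w s t : Alph5, fA (gA (u,v,w), gA (v,w,s), gA (w,s,t)) = w := by decide

def phi5 : (ℤ → Alph5) → (ℤ → Alph5) := fun x i => fA (x (i - 1), x i, x (i + 1))
def psi5 : (ℤ → Alph5) → (ℤ → Alph5) := fun x i => gA (x (i - 1), x i, x (i + 1))

theorem phi5_cont : Continuous phi5 := by
  apply continuous_pi
  intro i
  exact (continuous_of_discreteTopology (f := fA)).comp
    ((continuous_apply (i - 1)).prodMk ((continuous_apply i).prodMk (continuous_apply (i + 1))))

theorem psi5_cont : Continuous psi5 := by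
  apply continuous_pi
  intro i
  exact (continuous_of_discreteTopology (f := gA)).comp
    ((continuous_apply (i - 1)).prodMk ((continuous_apply i).prodMk (continuous_apply (i + 1))))

theorem psi5_phi5 : Function.LeftInverse psi5 phi5 := by
  intro x
  funext i
  show gA (fA (x (i-1-1), x (i-1), x (i-1+1)), fA (x (i-1), x i, x (i+1)),
      fA (x (i+1-1), x (i+1), x (i+1+1))) = x i
  rw [show i-1+1 = i by ring, show i+1-1 = i by ring]
  exact keyL _ _ _ _ _

theorem phi5_psi5 : Function.RightInverse psi5 phi5 := by
  intro x
  funext i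
  show fA (gA (x (i-1-1), x (i-1), x (i-1+1)), gA (x (i-1), x i, x (i+1)),
      gA (x (i+1-1), x (i+1), x (i+1+1))) = x i
  rw [show i-1+1 = i by ring, show i+1-1 = i by ring]
  exact keyR _ _ _ _ _

theorem phi5_shift : phi5 ∘ shift5 = shift5 ∘ phi5 := by
  funext x i
  show fA (x (i-1+1), x (i+1), x (i+1+1)) = fA (x (i+1-1), x (i+1), x (i+1+1))
  rw [show i-1+1 = i by ring, show i+1-1 = i by ring]

/- ### Locality and eventual periodicity -/

theorem phi5_c {x : ℤ → Alph5} {i : ℤ} (h : x i = csym) : phi5 x i = csym := by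
  show fA (x (i-1), x i, x (i+1)) = csym
  rw [h]; rfl

theorem phi5_c_iter {x : ℤ → Alph5} {i : ℤ} (h : x i = csym) (k : ℕ) :
    phi5^[k] x i = csym := by
  induction k with
  | zero => exact h
  | succ k ih => rw [Function.iterate_succ_apply']; exact phi5_c ih

theorem step_loc {x y : ℤ → Alph5} {q r : ℤ} (hxq : x q = csym) (hxr : x r = csym)
    (hag : ∀ i, q ≤ i → i ≤ r → x i = y i) :
    ∀ i, q ≤ i → i ≤ r → phi5 x i = phi5 y i := by
  intro i hqi hir
  rcases eq_or_lt_of_le hqi with rfl | hq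
  · rw [phi5_c hxq, phi5_c (by rw [← hag _ le_rfl hir]; exact hxq)]
  rcases eq_or_lt_of_le hir with rfl | hr
  · rw [phi5_c hxr, phi5_c (by rw [← hag _ hqi le_rfl]; exact hxr)]
  show fA (x (i-1), x i, x (i+1)) = fA (y (i-1), y i, y (i+1))
  rw [hag (i-1) (by omega) (by omega), hag i (by omega) (by omega),
    hag (i+1) (by omega) (by omega)]

theorem iter_loc {x y : ℤ → Alph5} {q r : ℤ} (hxq : x q = csym) (hxr : x r = csym)
    (hag : ∀ i, q ≤ i → i ≤ r → x i = y i) (k : ℕ) :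
    ∀ i, q ≤ i → i ≤ r → phi5^[k] x i = phi5^[k] y i := by
  induction k with
  | zero => exact hag
  | succ k ih =>
    intro i hqi hir
    rw [Function.iterate_succ_apply', Function.iterate_succ_apply']
    exact step_loc (phi5_c_iter hxq k) (phi5_c_iter hxr k) ih i hqi hir

theorem eventually_periodic {z : ℤ → Alph5} {q r : ℤ} (hq : z q = csym) (hr : z r = csym) :
    ∃ N p : ℕ, 0 < p ∧ ∀ m : ℕ, N ≤ m → ∀ i : ℤ, q ≤ i → i ≤ r →
      phi5^[m + p] z i = phi5^[m] z i := by
  obtain ⟨k1, k2, hne, heq⟩ := Finite.exists_ne_map_eq_of_infinite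
    (fun (k : ℕ) (j : (Finset.Icc q r : Finset ℤ)) => phi5^[k] z j.val)
  wlog hlt : k1 < k2 generalizing k1 k2
  · exact this k2 k1 hne.symm heq.symm (by omega)
  have hag : ∀ i, q ≤ i → i ≤ r → phi5^[k1] z i = phi5^[k2] z i := by
    intro i h1 h2
    exact congrFun heq ⟨i, Finset.mem_Icc.2 ⟨h1, h2⟩⟩
  have key : ∀ k : ℕ, ∀ i, q ≤ i → i ≤ r → phi5^[k + k1] z i = phi5^[k + k2] z i := by
    intro k i h1 h2
    rw [Function.iterate_add_apply, Function.iterate_add_apply]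
    exact iter_loc (phi5_c_iter hq k1) (phi5_c_iter hr k1) hag k i h1 h2
  refine ⟨k1, k2 - k1, by omega, fun m hm i h1 h2 => ?_⟩
  have e1 : m + (k2 - k1) = (m - k1) + k2 := by omega
  have e2 : m = (m - k1) + k1 := by omega
  rw [e1, ← key (m - k1) i h1 h2, ← e2]

/- ### Measure estimates -/

theorem M1 (μ : MeasureTheory.Measure (ℤ → Alph5))
    (hbern : ∀ (s : Finset ℤ) (f : ℤ → Alph5),
      μ {x : ℤ → Alph5 | ∀ i ∈ s, x i = f i} = (1 / 5 : ENNReal) ^ s.card)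
    (t : Finset ℤ) :
    ∀ (s : Finset ℤ) (f : ℤ → Alph5), Disjoint s t →
      μ {x : ℤ → Alph5 | (∀ i ∈ s, x i = f i) ∧ (∀ i ∈ t, x i ≠ csym)} ≤
        (1 / 5 : ENNReal) ^ s.card * (4 / 5 : ENNReal) ^ t.card := by
  induction t using Finset.induction_on with
  | empty =>
    intro s f _
    simp only [Finset.notMem_empty, false_implies, implies_true, and_true, Finset.card_empty,
      pow_zero, mul_one]
    exact le_of_eq (hbern s f)
  | @insert j t hj ih =>
    intro s f hdisj
    have hjs : j ∉ s := fun h =>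
      (Finset.disjoint_left.1 hdisj h) (Finset.mem_insert_self j t)
    have hst : Disjoint s t := hdisj.mono_right (Finset.subset_insert j t)
    have cover : {x : ℤ → Alph5 | (∀ i ∈ s, x i = f i) ∧ (∀ i ∈ insert j t, x i ≠ csym)} ⊆
        ⋃ (a : Bool × Bool), {x : ℤ → Alph5 |
          (∀ i ∈ insert j s, x i = Function.update f j (Sum.inl a) i) ∧
          (∀ i ∈ t, x i ≠ csym)} := by
      intro x hx
      obtain ⟨h1, h2⟩ := hx
      have hxj : x j ≠ csym := h2 j (Finset.mem_insert_self j t)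
      obtain ⟨p, hp⟩ : ∃ p : Bool × Bool, x j = Sum.inl p := by
        rcases h : x j with p | u
        · exact ⟨p, rfl⟩
        · exact absurd (show x j = csym by rw [h]; rfl) hxj
      refine mem_iUnion.2 ⟨p, ?_, fun i hi => h2 i (Finset.mem_insert_of_mem hi)⟩
      intro i hi
      rcases Finset.mem_insert.1 hi with rfl | hi'
      · exact hp.trans (Function.update_self i (Sum.inl p : Alph5) f).symm
      · exact (h1 i hi').trans (Function.update_of_ne (ne_of_mem_of_not_mem hi' hjs) _ _).symm
    calc μ _ ≤ μ (⋃ (a : Bool × Bool), {x : ℤ → Alph5 |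
          (∀ i ∈ insert j s, x i = Function.update f j (Sum.inl a) i) ∧
          (∀ i ∈ t, x i ≠ csym)}) := MeasureTheory.measure_mono cover
      _ ≤ ∑' (a : Bool × Bool), μ {x : ℤ → Alph5 |
          (∀ i ∈ insert j s, x i = Function.update f j (Sum.inl a) i) ∧
          (∀ i ∈ t, x i ≠ csym)} := MeasureTheory.measure_iUnion_le _
      _ ≤ ∑' (_ : Bool × Bool), (1 / 5 : ENNReal) ^ (insert j s).card * (4 / 5) ^ t.card := by
          apply ENNReal.tsum_le_tsum
          intro a
          exact ih (insert j s) (Function.update f j (Sum.inl a))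
            (Finset.disjoint_insert_left.2 ⟨hj, hst⟩)
      _ = 4 * ((1 / 5 : ENNReal) ^ (insert j s).card * (4 / 5) ^ t.card) := by
          rw [tsum_fintype, Finset.sum_const, Finset.card_univ, nsmul_eq_mul]
          norm_num [Fintype.card_prod]
      _ ≤ (1 / 5 : ENNReal) ^ s.card * (4 / 5) ^ (insert j t).card := by
          rw [Finset.card_insert_of_notMem hjs, Finset.card_insert_of_notMem hj,
            pow_succ, pow_succ]
          apply le_of_eq
          rw [div_eq_mul_inv (4 : ENNReal) 5, div_eq_mul_inv (1 : ENNReal) 5]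
          ring

theorem M2 (μ : MeasureTheory.Measure (ℤ → Alph5))
    (hbern : ∀ (s : Finset ℤ) (f : ℤ → Alph5),
      μ {x : ℤ → Alph5 | ∀ i ∈ s, x i = f i} = (1 / 5 : ENNReal) ^ s.card)
    (t : Finset ℤ) :
    μ {x : ℤ → Alph5 | ∀ i ∈ t, x i ≠ csym} ≤ (4 / 5 : ENNReal) ^ t.card := by
  have := M1 μ hbern t ∅ (fun _ => csym) (Finset.disjoint_empty_left t)
  simpa using this

theorem null_tail (μ : MeasureTheory.Measure (ℤ → Alph5))
    (hbern : ∀ (s : Finset ℤ) (f : ℤ → Alph5),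
      μ {x : ℤ → Alph5 | ∀ i ∈ s, x i = f i} = (1 / 5 : ENNReal) ^ s.card)
    (P : ℤ → Prop) (hP : ∀ M : ℕ, ∃ t : Finset ℤ, t.card = M ∧ ∀ i ∈ t, P i) :
    μ {z : ℤ → Alph5 | ∀ j : ℤ, P j → z j ≠ csym} = 0 := by
  have bound : ∀ M : ℕ, μ {z : ℤ → Alph5 | ∀ j : ℤ, P j → z j ≠ csym} ≤ (4 / 5 : ENNReal) ^ M := by
    intro M
    obtain ⟨t, hcard, ht⟩ := hP M
    have sub : {z : ℤ → Alph5 | ∀ j : ℤ, P j → z j ≠ csym} ⊆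
        {x : ℤ → Alph5 | ∀ i ∈ t, x i ≠ csym} :=
      fun z hz i hi => hz i (ht i hi)
    calc μ _ ≤ μ {x : ℤ → Alph5 | ∀ i ∈ t, x i ≠ csym} := MeasureTheory.measure_mono sub
      _ ≤ (4 / 5 : ENNReal) ^ t.card := M2 μ hbern t
      _ = (4 / 5 : ENNReal) ^ M := by rw [hcard]
  have h45 : (4 / 5 : ENNReal) < 1 := by
    rw [ENNReal.div_lt_iff (by norm_num) (by norm_num)]
    norm_num
  refine le_antisymm ?_ zero_le
  exact ge_of_tendsto' (ENNReal.tendsto_pow_atTop_nhds_zero_of_lt_one h45) bound |>.trans le_rfl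

/- ### Entropy estimate -/

theorem phi5_pair (T B : ℤ → Bool) (k : ℕ) (i : ℤ) :
    phi5^[k] (fun j => (Sum.inl (T j, B j) : Alph5)) i = Sum.inl (T (i + k), B (i - k)) := by
  induction k generalizing i with
  | zero => simp; rfl
  | succ k ih =>
    refine (congrFun (Function.iterate_succ_apply' phi5 k _) i).trans ?_
    show fA (phi5^[k] _ (i-1), phi5^[k] _ i, phi5^[k] _ (i+1)) = _
    rw [ih (i-1), ih i, ih (i+1)]
    show (Sum.inl (T (i + 1 + k), B (i - 1 - k)) : Alph5) = _
    rw [show i + 1 + (k:ℤ) = i + ((k:ℕ)+1 : ℕ) by push_cast; ring,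
      show i - 1 - (k:ℤ) = i - ((k:ℕ)+1 : ℕ) by push_cast; ring]

noncomputable def seqOf (n : ℕ) (t : Fin n → Bool) : ℤ → Bool := fun i =>
  if h : 0 ≤ i ∧ i < (n : ℤ) then t ⟨i.toNat, by omega⟩ else false

theorem seqOf_spec (n : ℕ) (t : Fin n → Bool) (j : Fin n) : seqOf n t (j : ℤ) = t j := by
  have h : (0 : ℤ) ≤ (j : ℤ) ∧ (j : ℤ) < n := ⟨Int.natCast_nonneg _, by exact_mod_cast j.isLt⟩
  rw [seqOf, dif_pos h]
  exact congrArg t (Fin.ext (by simp))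

noncomputable def ptOf (n : ℕ) (p : (Fin n → Bool) × (Fin n → Bool)) : ℤ → Alph5 :=
  fun i => Sum.inl (seqOf n p.1 i, seqOf n p.2 (-i))

theorem ptOf_iter (n : ℕ) (p : (Fin n → Bool) × (Fin n → Bool)) (j : Fin n) :
    phi5^[(j : ℕ)] (ptOf n p) 0 = Sum.inl (p.1 j, p.2 j) := by
  have := phi5_pair (seqOf n p.1) (fun i => seqOf n p.2 (-i)) (j : ℕ) 0
  rw [show ptOf n p = (fun i => (Sum.inl (seqOf n p.1 i, seqOf n p.2 (-i)) : Alph5)) from rfl]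
  rw [this]
  rw [show ((0 : ℤ) + (j:ℕ)) = (j : ℤ) by ring,
    show (-((0:ℤ) - (j:ℕ))) = (j : ℤ) by ring, seqOf_spec, seqOf_spec]

theorem ptOf_inj (n : ℕ) : Function.Injective (ptOf n) := by
  intro p p' h
  have h0 : ∀ j : Fin n, phi5^[(j:ℕ)] (ptOf n p) 0 = phi5^[(j:ℕ)] (ptOf n p') 0 := by
    intro j; rw [h]
  ext j
  · have := h0 j; rw [ptOf_iter, ptOf_iter] at this
    injection this with h'
    exact (Prod.ext_iff.1 h').1
  · have := h0 j; rw [ptOf_iter, ptOf_iter] at this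
    injection this with h'
    exact (Prod.ext_iff.1 h').2

open Dynamics ENNReal EReal Uniformity in
theorem entropy_bound : (Real.log 4 : EReal) ≤ Dynamics.coverEntropy phi5 Set.univ := by
  classical
  set U : Set ((ℤ → Alph5) × (ℤ → Alph5)) :=
    (fun p : (ℤ → Alph5) × (ℤ → Alph5) => (p.1 0, p.2 0)) ⁻¹' SetRel.id with hUdef
  have hU : U ∈ 𝓤 (ℤ → Alph5) := by
    have huc : UniformContinuous (Function.eval 0 : (ℤ → Alph5) → Alph5) :=
      Pi.uniformContinuous_proj _ 0
    have hid : SetRel.id ∈ 𝓤 Alph5 := by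
      rw [show (𝓤 Alph5) = Filter.principal SetRel.id from rfl]
      exact Filter.mem_principal_self _
    exact Filter.mem_map.1 (huc hid)
  have ptOf_inj' : ∀ (n : ℕ) (p p' : (Fin n → Bool) × (Fin n → Bool)),
      (∀ j : Fin n, phi5^[(j:ℕ)] (ptOf n p) 0 = phi5^[(j:ℕ)] (ptOf n p') 0) → p = p' := by
    intro n p p' h0
    ext j
    · have := h0 j; rw [ptOf_iter, ptOf_iter] at this
      injection this with h'
      exact (Prod.ext_iff.1 h').1
    · have := h0 j; rw [ptOf_iter, ptOf_iter] at this
      injection this with h'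
      exact (Prod.ext_iff.1 h').2
  have hnet : ∀ n : ℕ, IsDynNetIn phi5 Set.univ U n (↑(Finset.image (ptOf n) Finset.univ)) := by
    intro n
    refine ⟨subset_univ _, ?_⟩
    intro x hx y hy hxy
    simp only [Finset.coe_image, Finset.coe_univ, image_univ, mem_range] at hx hy
    obtain ⟨p, rfl⟩ := hx
    obtain ⟨p', rfl⟩ := hy
    have hpp' : p ≠ p' := fun h => hxy (by rw [h])
    rw [Function.onFun, Set.disjoint_left]
    intro z hz1 hz2
    apply hpp'
    apply ptOf_inj' n p p'
    intro j
    have e1 : phi5^[(j:ℕ)] (ptOf n p) 0 = phi5^[(j:ℕ)] z 0 :=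
      (mem_dynEntourage.1 hz1) (j:ℕ) j.isLt
    have e2 : phi5^[(j:ℕ)] (ptOf n p') 0 = phi5^[(j:ℕ)] z 0 :=
      (mem_dynEntourage.1 hz2) (j:ℕ) j.isLt
    rw [e1, e2]
  have hcard : ∀ n : ℕ, ((4 ^ n : ℕ) : ℕ∞) ≤ netMaxcard phi5 Set.univ U n := by
    intro n
    have h1 := (hnet n).card_le_netMaxcard
    have h2 : (Finset.image (ptOf n) Finset.univ).card = 4 ^ n := by
      rw [Finset.card_image_of_injective _ (ptOf_inj n), Finset.card_univ]
      simp only [Fintype.card_prod, Fintype.card_fun, Fintype.card_bool, Fintype.card_fin]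
      rw [← mul_pow]; norm_num
    rwa [h2] at h1
  have hterm : ∀ n : ℕ, 1 ≤ n →
      (Real.log 4 : EReal) ≤ ENNReal.log (netMaxcard phi5 Set.univ U n) / (n : EReal) := by
    intro n hn
    have l1 : ENNReal.log (((4 ^ n : ℕ) : ℕ∞) : ℝ≥0∞) ≤
        ENNReal.log (netMaxcard phi5 Set.univ U n) :=
      log_monotone (ENat.toENNReal_le.2 (hcard n))
    have l2 : ENNReal.log (((4 ^ n : ℕ) : ℕ∞) : ℝ≥0∞) = (n : EReal) * (Real.log 4 : EReal) := by
      have : (((4 ^ n : ℕ) : ℕ∞) : ℝ≥0∞) = (4 : ℝ≥0∞) ^ n := by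
        push_cast
        rfl
      rw [this, log_pow]
      congr 1
      rw [ENNReal.log_pos_real (by norm_num) (by norm_num)]
      norm_num
    refine le_trans ?_ (monotone_div_right_of_nonneg (Nat.cast_nonneg' n) l1)
    rw [l2]
    rw [EReal.le_div_iff_mul_le (by exact_mod_cast Nat.cast_pos'.2 hn) (natCast_ne_top n)]
    rw [mul_comm]
  have hnetE : (Real.log 4 : EReal) ≤ netEntropyEntourage phi5 Set.univ U := by
    apply Filter.le_limsup_of_frequently_le
      ((Filter.eventually_atTop.2 ⟨1, hterm⟩).frequently)
  exact hnetE.trans (netEntropyEntourage_le_coverEntropy (T := phi5) (F := Set.univ) hU)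

/- ### Main theorem -/

/-- On the full shift `(X_5, σ)` over the 5-letter alphabet
`{(a,b) : a,b ∈ {0,1}} ∪ {c}`, with `μ` the uniform Bernoulli measure, there is a range-one
sliding block code `φ` obeying the four displayed local rules which: (1) is an automorphism of
`(X_5, σ)`; (2) for every `n ≥ 1` and `μ`-a.e. `z`, has eventually periodic itinerary
`k ↦ φ^k(z)_{[-n,n]}`; and (3) satisfies `h_top(φ) ≥ log 4`. -/
theorem stmt4 (μ : MeasureTheory.Measure (ℤ → Alph5)) (hprob : MeasureTheory.IsProbabilityMeasure μ)
    (hbern : ∀ (s : Finset ℤ) (f : ℤ → Alph5),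
      μ {x : ℤ → Alph5 | ∀ i ∈ s, x i = f i} = (1 / 5 : ENNReal) ^ s.card) :
    ∃ φ : (ℤ → Alph5) → (ℤ → Alph5),
      -- φ is a sliding block code of range one
      (∃ f : Alph5 × Alph5 × Alph5 → Alph5, ∀ x i, φ x i = f (x (i - 1), x i, x (i + 1))) ∧
      -- rule 1 : φ(x)_i = c if x_i = c
      (∀ (x : ℤ → Alph5) (i : ℤ), x i = csym → φ x i = csym) ∧
      -- rule 2 : φ(x)_i = (a′,a) if x_{i−1} = c, x_i = (a,b), x_{i+1} = (a′,b′)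
      (∀ (x : ℤ → Alph5) (i : ℤ) (a b a' b' : Bool),
        x (i - 1) = csym → x i = Sum.inl (a, b) → x (i + 1) = Sum.inl (a', b') →
          φ x i = Sum.inl (a', a)) ∧
      -- rule 3 : φ(x)_i = (b′,b) if x_{i−1} = (a,b), x_i = (a′,b′), x_{i+1} = c
      (∀ (x : ℤ → Alph5) (i : ℤ) (a b a' b' : Bool),
        x (i - 1) = Sum.inl (a, b) → x i = Sum.inl (a', b') → x (i + 1) = csym →
          φ x i = Sum.inl (b', b)) ∧
      -- rule 4 : φ(x)_i = (a″,b) if x_{i−1} = (a,b), x_i = (a′,b′), x_{i+1} = (a″,b″)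
      (∀ (x : ℤ → Alph5) (i : ℤ) (a b a' b' a'' b'' : Bool),
        x (i - 1) = Sum.inl (a, b) → x i = Sum.inl (a', b') → x (i + 1) = Sum.inl (a'', b'') →
          φ x i = Sum.inl (a'', b)) ∧
      -- (1) φ is an automorphism of (X_5, σ): a homeomorphism commuting with the shift
      (Continuous φ ∧
        (∃ ψ : (ℤ → Alph5) → (ℤ → Alph5), Continuous ψ ∧
          Function.LeftInverse ψ φ ∧ Function.RightInverse ψ φ) ∧
        φ ∘ shift5 = shift5 ∘ φ) ∧
      -- (2) for every n ≥ 1 and μ-a.e. z, the itinerary k ↦ φ^k(z)_{[−n,n]} is eventually periodic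
      (∀ n : ℕ, 1 ≤ n → ∀ᵐ z ∂μ, ∃ N p : ℕ, 0 < p ∧
        ∀ m : ℕ, N ≤ m → ∀ i : ℤ, |i| ≤ (n : ℤ) → (φ^[m + p] z) i = (φ^[m] z) i) ∧
      -- (3) h_top(φ) ≥ log 4
      ((Real.log 4 : EReal) ≤ Dynamics.coverEntropy φ Set.univ) := by
  refine ⟨phi5, ⟨fA, fun x i => rfl⟩, ?_, ?_, ?_, ?_,
    ⟨phi5_cont, ⟨psi5, psi5_cont, psi5_phi5, phi5_psi5⟩, phi5_shift⟩, ?_, entropy_bound⟩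
  · intro x i h
    exact phi5_c h
  · intro x i a b a' b' h1 h2 h3
    show fA (x (i-1), x i, x (i+1)) = _
    rw [h1, h2, h3]; rfl
  · intro x i a b a' b' h1 h2 h3
    show fA (x (i-1), x i, x (i+1)) = _
    rw [h1, h2, h3]; rfl
  · intro x i a b a' b' a'' b'' h1 h2 h3
    show fA (x (i-1), x i, x (i+1)) = _
    rw [h1, h2, h3]; rfl
  · -- eventual periodicity a.e.
    intro n hn
    rw [MeasureTheory.ae_iff]
    have hB1 : μ {z : ℤ → Alph5 | ∀ j : ℤ, j ≤ -(n : ℤ) - 1 → z j ≠ csym} = 0 := by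
      apply null_tail μ hbern
      intro M
      refine ⟨Finset.Icc (-(n:ℤ)-M) (-(n:ℤ)-1), ?_, ?_⟩
      · rw [Int.card_Icc]; omega
      · intro i hi; rw [Finset.mem_Icc] at hi; omega
    have hB2 : μ {z : ℤ → Alph5 | ∀ j : ℤ, (n : ℤ) + 1 ≤ j → z j ≠ csym} = 0 := by
      apply null_tail μ hbern
      intro M
      refine ⟨Finset.Icc ((n:ℤ)+1) ((n:ℤ)+M), ?_, ?_⟩
      · rw [Int.card_Icc]; omega
      · intro i hi; rw [Finset.mem_Icc] at hi; omega
    apply MeasureTheory.measure_mono_null ?_ (MeasureTheory.measure_union_null hB1 hB2)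
    intro z hz
    by_contra hmem
    rw [Set.mem_union] at hmem
    push_neg at hmem
    obtain ⟨hm1, hm2⟩ := hmem
    simp only [mem_setOf_eq, not_forall] at hm1 hm2
    obtain ⟨q, hq1, hq2⟩ := hm1
    obtain ⟨r, hr1, hr2⟩ := hm2
    rw [not_not] at hq2 hr2
    obtain ⟨N, p, hp, h⟩ := eventually_periodic hq2 hr2
    exact hz ⟨N, p, hp, fun m hm i hi => by
      have habs := abs_le.1 hi
      exact h m hm i (by omega) (by omega)⟩
end
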